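/- Let S ∈ R^{n×n} with induced ∞-norm ‖S‖_∞, X ∈ R^{n×d}, and consider the L-layer linear GCN node-level function class F = {i ↦ (S^L X W)_i β : ‖W‖ ≤ 1, ‖β‖₂ ≤ B} (norms on W bounded appropriately). Then for every node i and every f ∈ F, |f(i)| ≤ B ‖S‖_∞^{L−1} ‖S X‖_{2→∞}, where ‖M‖_{2→∞} = max_i ‖M_i‖₂ is the maximum row Euclidean norm. -/
import Mathlib

noncomputable def nrm2 {d : ℕ} (v : Fin d → ℝ) : ℝ := Real.sqrt (∑ k, (v k) ^ 2)

lemma nrm2_nonneg {d : ℕ} (v : Fin d → ℝ) : 0 ≤ nrm2 v := Real.sqrt_nonneg _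

lemma nrm2_eq_norm {d : ℕ} (v : EuclideanSpace ℝ (Fin d)) : ‖v‖ = nrm2 v := by
  rw [EuclideanSpace.norm_eq, nrm2]
  congr 1; apply Finset.sum_congr rfl; intro k _; simp [Real.norm_eq_abs, sq_abs]

lemma cs {d : ℕ} (v β : Fin d → ℝ) : |∑ k, v k * β k| ≤ nrm2 v * nrm2 β := by
  calc |∑ k, v k * β k| ≤ ∑ k, |v k * β k| := Finset.abs_sum_le_sum_abs _ _
    _ = ∑ k, |v k| * |β k| := by simp [abs_mul]
    _ ≤ _ := by
      have := Real.sum_mul_le_sqrt_mul_sqrt Finset.univ (fun k => |v k|) (fun k => |β k|)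
      simpa [nrm2, sq_abs] using this

lemma tri {n d : ℕ} (a : Fin n → ℝ) (M : Matrix (Fin n) (Fin d) ℝ) :
    nrm2 (fun k => ∑ j, a j * M j k) ≤ ∑ j, |a j| * nrm2 (M j) := by
  set e := WithLp.linearEquiv 2 ℝ (Fin d → ℝ)
  have h : nrm2 (fun k => ∑ j, a j * M j k) = ‖∑ j, a j • e.symm (M j)‖ := by
    rw [nrm2_eq_norm]
    congr 1
    have : (∑ j, a j • e.symm (M j)) = e.symm (∑ j, a j • M j) := by
      rw [map_sum]; simp
    rw [this]
    ext k
    show _ = (∑ j, a j • M j) k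
    rw [Finset.sum_apply]
    simp
  rw [h]
  calc ‖∑ j, a j • e.symm (M j)‖ ≤ ∑ j, ‖a j • e.symm (M j)‖ := norm_sum_le _ _
    _ = ∑ j, |a j| * nrm2 (M j) := by
        apply Finset.sum_congr rfl; intro j _
        rw [norm_smul, Real.norm_eq_abs, nrm2_eq_norm]
        rfl

/-- The induced `∞`-norm (maximum absolute row sum) of a matrix. -/
noncomputable def matrixInfNorm {n m : ℕ} (M : Matrix (Fin n) (Fin m) ℝ) : ℝ :=
  ⨆ i, ∑ j, |M i j|

/-- The `2→∞` norm of a matrix: the maximum Euclidean norm of a row. -/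
noncomputable def matrixTwoInfNorm {n m : ℕ} (M : Matrix (Fin n) (Fin m) ℝ) : ℝ :=
  ⨆ i, Real.sqrt (∑ j, (M i j) ^ 2)

lemma rowSum_le_infNorm {n : ℕ} (S : Matrix (Fin n) (Fin n) ℝ) (i : Fin n) :
    ∑ j, |S i j| ≤ matrixInfNorm S :=
  le_ciSup (f := fun i => ∑ j, |S i j|) (Set.Finite.bddAbove (Set.finite_range _)) i

lemma infNorm_nonneg {n : ℕ} (S : Matrix (Fin n) (Fin n) ℝ) : 0 ≤ matrixInfNorm S :=
  Real.iSup_nonneg fun i => Finset.sum_nonneg fun j _ => abs_nonneg _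

lemma twoInf_nonneg {n m : ℕ} (M : Matrix (Fin n) (Fin m) ℝ) : 0 ≤ matrixTwoInfNorm M :=
  Real.iSup_nonneg fun _ => Real.sqrt_nonneg _

lemma row_le_twoInf {n m : ℕ} (M : Matrix (Fin n) (Fin m) ℝ) (i : Fin n) :
    nrm2 (M i) ≤ matrixTwoInfNorm M :=
  le_ciSup (f := fun i => Real.sqrt (∑ j, (M i j) ^ 2)) (Set.Finite.bddAbove (Set.finite_range _)) i

lemma pow_row_bound {n d : ℕ} (S : Matrix (Fin n) (Fin n) ℝ)
    (M : Matrix (Fin n) (Fin d) ℝ) (m : ℕ) (i : Fin n) :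
    nrm2 ((S ^ m * M) i) ≤ matrixInfNorm S ^ m * matrixTwoInfNorm M := by
  induction m generalizing i with
  | zero => simpa using row_le_twoInf M i
  | succ m ih =>
    have hrow : (S ^ (m + 1) * M) i = fun k => ∑ j, S i j * (S ^ m * M) j k := by
      ext k
      rw [pow_succ', Matrix.mul_assoc]
      simp [Matrix.mul_apply]
    rw [hrow]
    calc nrm2 (fun k => ∑ j, S i j * (S ^ m * M) j k)
        ≤ ∑ j, |S i j| * nrm2 ((S ^ m * M) j) := tri _ _
      _ ≤ ∑ j, |S i j| * (matrixInfNorm S ^ m * matrixTwoInfNorm M) := by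
          apply Finset.sum_le_sum; intro j _
          exact mul_le_mul_of_nonneg_left (ih j) (abs_nonneg _)
      _ = (∑ j, |S i j|) * (matrixInfNorm S ^ m * matrixTwoInfNorm M) := by
          rw [Finset.sum_mul]
      _ ≤ matrixInfNorm S * (matrixInfNorm S ^ m * matrixTwoInfNorm M) := by
          apply mul_le_mul_of_nonneg_right (rowSum_le_infNorm S i)
          exact mul_nonneg (pow_nonneg (infNorm_nonneg S) m) (twoInf_nonneg M)
      _ = matrixInfNorm S ^ (m + 1) * matrixTwoInfNorm M := by ring

/-- Uniform bound on the outputs of an `L`-layer linear GCN node-level predictor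
`f(i) = (S^L X W)_i β` with spectral norm of `W` at most 1 and `‖β‖₂ ≤ B`:
`|f(i)| ≤ B ‖S‖_∞^{L-1} ‖SX‖_{2→∞}`. -/
theorem linearGCN_output_bound
    {n d : ℕ} (hn : 0 < n) (L : ℕ) (hL : 1 ≤ L)
    (S : Matrix (Fin n) (Fin n) ℝ) (X : Matrix (Fin n) (Fin d) ℝ)
    (W : Matrix (Fin d) (Fin d) ℝ)
    (hW : ∀ v : Fin d → ℝ,
      Real.sqrt (∑ k, (Matrix.vecMul v W k) ^ 2) ≤ Real.sqrt (∑ k, (v k) ^ 2))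
    (B : ℝ) (hB : 0 ≤ B)
    (β : Fin d → ℝ) (hβ : Real.sqrt (∑ k, (β k) ^ 2) ≤ B) :
    ∀ i, |∑ k, (S ^ L * X * W) i k * β k| ≤
      B * matrixInfNorm S ^ (L - 1) * matrixTwoInfNorm (S * X) := by
  intro i
  obtain ⟨m, rfl⟩ : ∃ m, L = m + 1 := ⟨L - 1, (Nat.succ_pred_eq_of_pos hL).symm⟩
  have hrowW : (S ^ (m + 1) * X * W) i = Matrix.vecMul ((S ^ (m + 1) * X) i) W := by
    ext k; simp [Matrix.mul_apply, Matrix.vecMul, dotProduct]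
  have h1 : nrm2 ((S ^ (m + 1) * X * W) i) ≤ nrm2 ((S ^ (m + 1) * X) i) := by
    rw [hrowW]; exact hW _
  have h2 : nrm2 ((S ^ (m + 1) * X) i) ≤ matrixInfNorm S ^ m * matrixTwoInfNorm (S * X) := by
    have : S ^ (m + 1) * X = S ^ m * (S * X) := by
      rw [pow_succ, Matrix.mul_assoc]
    rw [this]
    exact pow_row_bound S (S * X) m i
  calc |∑ k, (S ^ (m + 1) * X * W) i k * β k|
      ≤ nrm2 ((S ^ (m + 1) * X * W) i) * nrm2 β := cs _ _
    _ ≤ (matrixInfNorm S ^ m * matrixTwoInfNorm (S * X)) * B := by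
        apply mul_le_mul (h1.trans h2) hβ (nrm2_nonneg _)
        exact mul_nonneg (pow_nonneg (infNorm_nonneg S) m) (twoInf_nonneg (S * X))
    _ = B * matrixInfNorm S ^ (m + 1 - 1) * matrixTwoInfNorm (S * X) := by
        simp; ring
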